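/- arXiv:1403.0330 — 4 statements merged into one kernel-verified Lean document; each statement's English description precedes it below -/
import Mathlib

section
/- Let μ be a measure on a measurable space, let h, f be nonnegative measurable functions, and let β > 0. If ∫ f^(1+β) dμ < ∞ and ∫ h^(1+β) dμ < ∞, then the density power divergence d_β(h,f) = ∫ { f^(1+β) − (1+1/β) f^β h + (1/β) h^(1+β) } dμ satisfies d_β(h,f) ≥ 0, and d_β(h,f) = 0 if and only if h = f μ-almost everywhere. -/
open MeasureTheory

/-- Pointwise strict inequality: the (β-scaled) DPD integrand is positive when `a ≠ b`. -/
lemma dpd_pointwise_pos {β a b : ℝ} (hβ : 0 < β) (ha : 0 ≤ a) (hb : 0 ≤ b) (hab : a ≠ b) :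
    0 < a ^ (1 + β) - (1 + β) * b ^ β * a + β * b ^ (1 + β) := by
  rcases eq_or_lt_of_le hb with hb0 | hb0
  · -- b = 0
    have hbz : b = 0 := hb0.symm
    have ha0 : 0 < a := lt_of_le_of_ne ha (fun e => hab (e ▸ hbz.symm))
    rw [hbz, Real.zero_rpow hβ.ne', Real.zero_rpow (by positivity : (1:ℝ) + β ≠ 0)]
    simpa using Real.rpow_pos_of_pos ha0 (1 + β)
  · -- b > 0
    set F : ℝ → ℝ := fun t => t ^ (1 + β) - (1 + β) * b ^ β * t with hF
    have hderiv : ∀ t : ℝ, HasDerivAt F ((1 + β) * t ^ β - (1 + β) * b ^ β) t := by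
      intro t
      have h1 : HasDerivAt (fun t : ℝ => t ^ (1 + β)) ((1 + β) * t ^ ((1 + β) - 1)) t :=
        Real.hasDerivAt_rpow_const (Or.inr (by linarith))
      have h1' : HasDerivAt (fun t : ℝ => t ^ (1 + β)) ((1 + β) * t ^ β) t := by
        simpa using h1
      simpa [hF, mul_comm, Pi.sub_def] using h1'.sub ((hasDerivAt_id t).const_mul ((1 + β) * b ^ β))
    have hcont : Continuous F := by
      have : Differentiable ℝ F := fun t => (hderiv t).differentiableAt
      exact this.continuous
    have hderiv_eq : ∀ t : ℝ, deriv F t = (1 + β) * t ^ β - (1 + β) * b ^ β :=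
      fun t => (hderiv t).deriv
    have hmono : StrictMonoOn F (Set.Ici b) := by
      apply strictMonoOn_of_deriv_pos (convex_Ici b) hcont.continuousOn
      intro t ht
      rw [interior_Ici] at ht
      rw [hderiv_eq]
      have : b ^ β < t ^ β := Real.rpow_lt_rpow hb ht hβ
      nlinarith
    have hanti : StrictAntiOn F (Set.Icc 0 b) := by
      apply strictAntiOn_of_deriv_neg (convex_Icc 0 b) hcont.continuousOn
      intro t ht
      rw [interior_Icc] at ht
      rw [hderiv_eq]
      have : t ^ β < b ^ β := Real.rpow_lt_rpow ht.1.le ht.2 hβ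
      nlinarith
    have hFb : F b = -(β * b ^ (1 + β)) := by
      have hbb : b ^ β * b = b ^ (1 + β) := by
        rw [add_comm, Real.rpow_add_one hb0.ne']
      simp only [hF]
      nlinarith
    have hFlt : F b < F a := by
      rcases lt_or_gt_of_ne hab with hlt | hgt
      · exact hanti (Set.mem_Icc.2 ⟨ha, hlt.le⟩) (Set.mem_Icc.2 ⟨hb, le_refl b⟩) hlt
      · exact hmono (Set.mem_Ici.2 (le_refl b)) (Set.mem_Ici.2 hgt.le) hgt
    have hFa : F a = a ^ (1 + β) - (1 + β) * b ^ β * a := rfl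
    rw [hFb, hFa] at hFlt
    linarith
/-- Pointwise nonnegativity (with equality when `a = b`). -/
lemma dpd_pointwise_nonneg {β a b : ℝ} (hβ : 0 < β) (ha : 0 ≤ a) (hb : 0 ≤ b) :
    0 ≤ a ^ (1 + β) - (1 + β) * b ^ β * a + β * b ^ (1 + β) := by
  by_cases hab : a = b
  · subst hab
    rcases eq_or_lt_of_le ha with h0 | h0
    · rw [← h0, Real.zero_rpow hβ.ne', Real.zero_rpow (by positivity : (1:ℝ) + β ≠ 0)]
      simp
    · have : a ^ β * a = a ^ (1 + β) := by rw [add_comm, Real.rpow_add_one h0.ne']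
      nlinarith
  · exact (dpd_pointwise_pos hβ ha hb hab).le

/-- Let `μ` be a measure on a measurable space, let `h`, `f` be nonnegative
measurable functions, and let `β > 0`. If `∫ f^(1+β) dμ < ∞` and `∫ h^(1+β) dμ < ∞`, then the
density power divergence `d_β(h,f) = ∫ { f^(1+β) − (1+1/β) f^β h + (1/β) h^(1+β) } dμ`
satisfies `d_β(h,f) ≥ 0`, and `d_β(h,f) = 0` if and only if `h = f` μ-almost everywhere. -/
theorem dpd_nonneg_and_eq_zero_iff {α : Type*} [MeasurableSpace α] (μ : Measure α)
    (h f : α → ℝ) (hhm : Measurable h) (hfm : Measurable f)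
    (hh0 : ∀ x, 0 ≤ h x) (hf0 : ∀ x, 0 ≤ f x)
    (β : ℝ) (hβ : 0 < β)
    (hfint : Integrable (fun x => f x ^ (1 + β)) μ)
    (hhint : Integrable (fun x => h x ^ (1 + β)) μ) :
    0 ≤ (∫ x, (f x ^ (1 + β) - (1 + 1 / β) * f x ^ β * h x + (1 / β) * h x ^ (1 + β)) ∂μ) ∧
      ((∫ x, (f x ^ (1 + β) - (1 + 1 / β) * f x ^ β * h x + (1 / β) * h x ^ (1 + β)) ∂μ) = 0
        ↔ h =ᵐ[μ] f) := by
  set g : α → ℝ :=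
    fun x => f x ^ (1 + β) - (1 + 1 / β) * f x ^ β * h x + (1 / β) * h x ^ (1 + β) with hg
  -- g x is (1/β) times the scaled expression
  have hrep : ∀ x, (h x ^ (1 + β) - (1 + β) * f x ^ β * h x + β * f x ^ (1 + β)) / β = g x := by
    intro x
    have hβ0 : β ≠ 0 := hβ.ne'
    simp only [hg]
    field_simp
    ring
  -- pointwise nonnegativity of g
  have hgnn : ∀ x, 0 ≤ g x := by
    intro x
    have key := dpd_pointwise_nonneg hβ (hh0 x) (hf0 x) (a := h x) (b := f x)
    rw [← hrep x]
    positivity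
  -- pointwise positivity when h x ≠ f x
  have hgpos : ∀ x, h x ≠ f x → 0 < g x := by
    intro x hne
    have key := dpd_pointwise_pos hβ (hh0 x) (hf0 x) hne
    rw [← hrep x]
    positivity
  -- g x = 0 when h x = f x
  have hgzero : ∀ x, h x = f x → g x = 0 := by
    intro x he
    rcases eq_or_lt_of_le (hf0 x) with h0 | h0
    · have hfz : f x = 0 := h0.symm
      have hhz : h x = 0 := he.trans hfz
      simp only [hg, hfz, hhz, Real.zero_rpow hβ.ne',
        Real.zero_rpow (by positivity : (1:ℝ) + β ≠ 0)]
      ring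
    · have hfx : f x ^ β * f x = f x ^ (1 + β) := by
        rw [add_comm, Real.rpow_add_one h0.ne']
      simp only [hg, he]
      rw [mul_assoc, hfx]
      field_simp
      ring
  -- integrability of g
  have hmid : Integrable (fun x => (1 + 1 / β) * f x ^ β * h x) μ := by
    have hbound : Integrable (fun x => f x ^ (1 + β) + 1 / β * h x ^ (1 + β)) μ :=
      hfint.add (hhint.const_mul _)
    apply hbound.mono'
    · apply Measurable.aestronglyMeasurable
      fun_prop
    · filter_upwards with x
      have key := dpd_pointwise_nonneg hβ (hh0 x) (hf0 x) (a := h x) (b := f x)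
      have h1 : 0 ≤ (1 + 1 / β) * f x ^ β * h x := by
        have := Real.rpow_nonneg (hf0 x) β
        have := hh0 x
        positivity
      rw [Real.norm_eq_abs, abs_of_nonneg h1]
      have heq : (f x ^ (1 + β) + 1 / β * h x ^ (1 + β)) - (1 + 1 / β) * f x ^ β * h x =
          (h x ^ (1 + β) - (1 + β) * f x ^ β * h x + β * f x ^ (1 + β)) / β := by
        have hβ0 : β ≠ 0 := hβ.ne'
        field_simp
        ring
      nlinarith [div_nonneg key hβ.le, heq]
  have hgint : Integrable g μ := by
    have := (hfint.sub hmid).add (hhint.const_mul (1 / β))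
    exact this
  -- conclusion
  have hnn : 0 ≤ ∫ x, g x ∂μ := integral_nonneg hgnn
  refine ⟨hnn, ?_⟩
  rw [integral_eq_zero_iff_of_nonneg hgnn hgint]
  constructor
  · intro hae
    filter_upwards [hae] with x hx
    by_contra hne
    exact (hgpos x hne).ne' hx
  · intro hae
    filter_upwards [hae] with x hx
    exact hgzero x hx
end

section
/- Let μ ∈ ℝ, σ > 0, β ≥ 0, and let u(x) = ( (x−μ)/σ² , ((x−μ)² − σ²)/σ³ ) be the normal score vector. Then the 2×2 matrix J_β = ∫_ℝ u(x)·u(x)ᵀ·φ_{μ,σ}(x)^(1+β) dx equals ( (1+β)^(1/2) (2π)^(β/2) σ^(2+β) )^(−1) times the diagonal matrix diag( 1/(1+β) , (β²+2)/(1+β)² ). -/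
open MeasureTheory

/-- The normal density with mean `μ` and standard deviation `σ`. -/
noncomputable def normalPdf (μ σ x : ℝ) : ℝ :=
  (2 * Real.pi * σ ^ 2) ^ (-(1 / 2) : ℝ) * Real.exp (-(x - μ) ^ 2 / (2 * σ ^ 2))

/-- The normal score vector `u(x) = ( (x−μ)/σ² , ((x−μ)² − σ²)/σ³ )`. -/
noncomputable def normalScore (μ σ x : ℝ) : Fin 2 → ℝ :=
  ![(x - μ) / σ ^ 2, ((x - μ) ^ 2 - σ ^ 2) / σ ^ 3]

lemma integrable_pow_gauss {a : ℝ} (ha : 0 < a) (n : ℕ) :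
    Integrable fun x : ℝ => x ^ n * Real.exp (-a * x ^ 2) := by
  have hn : (-1 : ℝ) < (n : ℝ) := lt_of_lt_of_le neg_one_lt_zero (Nat.cast_nonneg n)
  simpa [Real.rpow_natCast] using integrable_rpow_mul_exp_neg_mul_sq ha hn

lemma gauss_moment_nat {a : ℝ} (ha : 0 < a) (n : ℕ) (hn : Even n) :
    ∫ x : ℝ, x ^ n * Real.exp (-a * x ^ 2)
      = a ^ (-((n : ℝ) + 1) / 2) * Real.Gamma (((n : ℝ) + 1) / 2) := by
  have habs : ∀ x : ℝ, |x| ^ n * Real.exp (-a * |x| ^ 2) = x ^ n * Real.exp (-a * x ^ 2) := by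
    intro x
    rw [hn.pow_abs, sq_abs]
  have h1 : ∫ x : ℝ, x ^ n * Real.exp (-a * x ^ 2)
      = 2 * ∫ x in Set.Ioi (0 : ℝ), x ^ n * Real.exp (-a * x ^ 2) := by
    rw [← integral_comp_abs (f := fun t : ℝ => t ^ n * Real.exp (-a * t ^ 2))]
    simp_rw [habs]
  have h2 : ∫ x in Set.Ioi (0 : ℝ), x ^ n * Real.exp (-a * x ^ 2)
      = a ^ (-((n : ℝ) + 1) / 2) * (1 / 2) * Real.Gamma (((n : ℝ) + 1) / 2) := by
    have h := integral_rpow_mul_exp_neg_mul_rpow (p := 2) (q := (n : ℝ)) two_pos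
      (lt_of_lt_of_le neg_one_lt_zero (Nat.cast_nonneg n)) ha
    rw [← h]
    refine setIntegral_congr_fun measurableSet_Ioi (fun x _ => ?_)
    rw [show (2 : ℝ) = ((2 : ℕ) : ℝ) by norm_num, Real.rpow_natCast, Real.rpow_natCast]
  rw [h1, h2]; ring

lemma Gamma_three_halves : Real.Gamma (3 / 2) = Real.sqrt Real.pi / 2 := by
  rw [show (3 / 2 : ℝ) = 1 / 2 + 1 by norm_num, Real.Gamma_add_one (by norm_num),
    Real.Gamma_one_half_eq]
  ring

lemma Gamma_five_halves : Real.Gamma (5 / 2) = 3 * Real.sqrt Real.pi / 4 := by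
  rw [show (5 / 2 : ℝ) = 3 / 2 + 1 by norm_num, Real.Gamma_add_one (by norm_num),
    Gamma_three_halves]
  ring

lemma master_identity (σ β : ℝ) (hσ : 0 < σ) (hβ : 0 ≤ β) :
    ((1 + β) ^ ((1 : ℝ) / 2) * (2 * Real.pi) ^ (β / 2) * σ ^ (2 + β)) *
      ((2 * Real.pi * σ ^ 2) ^ (-(1 + β) / 2) *
        (((1 + β) / (2 * σ ^ 2)) ^ (-(1 : ℝ) / 2) * Real.sqrt Real.pi)) = σ ^ 2 := by
  have hπ := Real.pi_pos
  have hc : (0 : ℝ) < 1 + β := by linarith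
  have h2π : (0 : ℝ) < 2 * Real.pi := by linarith
  have hA : (0 : ℝ) < 2 * Real.pi * σ ^ 2 := by positivity
  have ha : (0 : ℝ) < (1 + β) / (2 * σ ^ 2) := by positivity
  have hR : (0 : ℝ) < σ ^ 2 := by positivity
  rw [Real.sqrt_eq_rpow, Real.rpow_def_of_pos hc, Real.rpow_def_of_pos h2π,
    Real.rpow_def_of_pos hσ, Real.rpow_def_of_pos hA, Real.rpow_def_of_pos ha,
    Real.rpow_def_of_pos hπ]
  conv_rhs => rw [← Real.exp_log hR]
  rw [← Real.exp_add, ← Real.exp_add, ← Real.exp_add, ← Real.exp_add, ← Real.exp_add]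
  congr 1
  rw [Real.log_mul h2π.ne' (pow_ne_zero 2 hσ.ne'), Real.log_div hc.ne'
    (by positivity : (2 * σ ^ 2 : ℝ) ≠ 0), Real.log_mul two_ne_zero hπ.ne',
    Real.log_mul two_ne_zero (pow_ne_zero 2 hσ.ne')]
  simp only [Real.log_pow]
  push_cast
  ring

/-- Let `μ ∈ ℝ`, `σ > 0`, `β ≥ 0`, and `u` the normal score vector. Then the
2×2 matrix `J_β = ∫ u uᵀ φ_{μ,σ}^(1+β) dx` equals
`( (1+β)^(1/2) (2π)^(β/2) σ^(2+β) )⁻¹ · diag( 1/(1+β), (β²+2)/(1+β)² )`. -/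
theorem normal_J_beta (μ σ β : ℝ) (hσ : 0 < σ) (hβ : 0 ≤ β) :
    (Matrix.of fun i j : Fin 2 =>
        ∫ x : ℝ, normalScore μ σ x i * normalScore μ σ x j * normalPdf μ σ x ^ (1 + β)) =
      ((1 + β) ^ ((1 : ℝ) / 2) * (2 * Real.pi) ^ (β / 2) * σ ^ (2 + β))⁻¹ •
        Matrix.diagonal ![1 / (1 + β), (β ^ 2 + 2) / (1 + β) ^ 2] := by
  have hπ := Real.pi_pos
  have hc : (0 : ℝ) < 1 + β := by linarith
  set K : ℝ := (2 * Real.pi * σ ^ 2) ^ (-(1 + β) / 2) with hK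
  set a : ℝ := (1 + β) / (2 * σ ^ 2) with haa
  have ha : 0 < a := by positivity
  have hpdf : ∀ x : ℝ, normalPdf μ σ x ^ (1 + β) = K * Real.exp (-a * (x - μ) ^ 2) := by
    intro x
    unfold normalPdf
    rw [Real.mul_rpow (by positivity) (Real.exp_pos _).le,
      ← Real.rpow_mul (by positivity : (0:ℝ) ≤ 2 * Real.pi * σ ^ 2), ← Real.exp_mul]
    rw [hK, haa]
    congr 1
    · congr 1; ring
    · congr 1; field_simp
  set T : ℝ := (1 + β) ^ ((1 : ℝ) / 2) * (2 * Real.pi) ^ (β / 2) * σ ^ (2 + β) with hTdef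
  have hT : 0 < T := by
    rw [hTdef]; positivity
  have hw : (0:ℝ) < a ^ (-(1:ℝ)/2) := Real.rpow_pos_of_pos ha _
  have hs : (0:ℝ) < Real.sqrt Real.pi := Real.sqrt_pos.mpr hπ
  have hM := master_identity σ β hσ hβ
  have hKval : K = σ ^ 2 / (T * (a ^ (-(1:ℝ)/2) * Real.sqrt Real.pi)) := by
    rw [eq_div_iff (by positivity)]
    linear_combination hM
  have h32 : a ^ (-(3:ℝ)/2) = a⁻¹ * a ^ (-(1:ℝ)/2) := by
    rw [← Real.rpow_neg_one a, ← Real.rpow_add ha]; norm_num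
  have h52 : a ^ (-(5:ℝ)/2) = a⁻¹ * (a⁻¹ * a ^ (-(1:ℝ)/2)) := by
    rw [← Real.rpow_neg_one a, ← Real.rpow_add ha, ← Real.rpow_add ha]; norm_num
  have haInv : a⁻¹ = 2 * σ^2 / (1+β) := by rw [haa, inv_div]
  have m0 : ∫ x : ℝ, Real.exp (-a * x ^ 2) = a ^ (-(1:ℝ)/2) * Real.sqrt Real.pi := by
    have h := gauss_moment_nat ha 0 Even.zero
    norm_num [Real.Gamma_one_half_eq] at h
    convert h using 3 <;> norm_num
  have m2 : ∫ x : ℝ, x ^ 2 * Real.exp (-a * x ^ 2)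
      = a ^ (-(3:ℝ)/2) * (Real.sqrt Real.pi / 2) := by
    have h := gauss_moment_nat ha 2 (by norm_num)
    norm_num [Gamma_three_halves] at h
    convert h using 3 <;> norm_num
  have m4 : ∫ x : ℝ, x ^ 4 * Real.exp (-a * x ^ 2)
      = a ^ (-(5:ℝ)/2) * (3 * Real.sqrt Real.pi / 4) := by
    have h := gauss_moment_nat ha 4 ⟨2, by norm_num⟩
    norm_num [Gamma_five_halves] at h
    convert h using 3 <;> norm_num
  have hoddint : ∫ x : ℝ, x * (x^2 - σ^2) / σ^5 * Real.exp (-a * x^2) = 0 := by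
    set g : ℝ → ℝ := fun t => t * (t^2 - σ^2) / σ^5 * Real.exp (-a * t^2) with hg
    have hodd : ∀ x : ℝ, g (-x) = - g x := by
      intro x
      simp only [hg, neg_sq]
      ring
    have h1 : ∫ x : ℝ, g (-x) = ∫ x : ℝ, g x := integral_neg_eq_self g volume
    simp_rw [hodd, integral_neg] at h1
    linarith
  ext i j
  fin_cases i <;> fin_cases j <;>
    simp [normalScore, Matrix.diagonal]
  · -- (0,0)
    have e00 : ∀ x : ℝ, (x - μ) / σ ^ 2 * ((x - μ) / σ ^ 2) * normalPdf μ σ x ^ (1 + β)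
        = (K / σ ^ 4) * ((x - μ) ^ 2 * Real.exp (-a * (x - μ) ^ 2)) := by
      intro x; rw [hpdf x]; field_simp
    simp_rw [e00, integral_const_mul]
    rw [show (∫ x : ℝ, (x - μ) ^ 2 * Real.exp (-a * (x - μ) ^ 2))
        = ∫ x : ℝ, x ^ 2 * Real.exp (-a * x ^ 2) from
      integral_sub_right_eq_self (fun t : ℝ => t ^ 2 * Real.exp (-a * t ^ 2)) μ, m2]
    rw [hKval, h32, haInv]
    field_simp
  · -- (0,1)
    have e01 : ∀ x : ℝ, (x - μ) / σ ^ 2 * (((x - μ) ^ 2 - σ ^ 2) / σ ^ 3) *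
          normalPdf μ σ x ^ (1 + β)
        = K * ((x - μ) * ((x - μ) ^ 2 - σ ^ 2) / σ ^ 5 * Real.exp (-a * (x - μ) ^ 2)) := by
      intro x; rw [hpdf x]; field_simp
    simp_rw [e01, integral_const_mul]
    rw [show (∫ x : ℝ, (x - μ) * ((x - μ) ^ 2 - σ ^ 2) / σ ^ 5 * Real.exp (-a * (x - μ) ^ 2))
        = ∫ x : ℝ, x * (x ^ 2 - σ ^ 2) / σ ^ 5 * Real.exp (-a * x ^ 2) from
      integral_sub_right_eq_self (fun t : ℝ => t * (t ^ 2 - σ ^ 2) / σ ^ 5 *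
        Real.exp (-a * t ^ 2)) μ, hoddint, mul_zero]
  · -- (1,0)
    have e10 : ∀ x : ℝ, ((x - μ) ^ 2 - σ ^ 2) / σ ^ 3 * ((x - μ) / σ ^ 2) *
          normalPdf μ σ x ^ (1 + β)
        = K * ((x - μ) * ((x - μ) ^ 2 - σ ^ 2) / σ ^ 5 * Real.exp (-a * (x - μ) ^ 2)) := by
      intro x; rw [hpdf x]; field_simp
    simp_rw [e10, integral_const_mul]
    rw [show (∫ x : ℝ, (x - μ) * ((x - μ) ^ 2 - σ ^ 2) / σ ^ 5 * Real.exp (-a * (x - μ) ^ 2))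
        = ∫ x : ℝ, x * (x ^ 2 - σ ^ 2) / σ ^ 5 * Real.exp (-a * x ^ 2) from
      integral_sub_right_eq_self (fun t : ℝ => t * (t ^ 2 - σ ^ 2) / σ ^ 5 *
        Real.exp (-a * t ^ 2)) μ, hoddint, mul_zero]
  · -- (1,1)
    have e11 : ∀ x : ℝ, ((x - μ) ^ 2 - σ ^ 2) / σ ^ 3 * (((x - μ) ^ 2 - σ ^ 2) / σ ^ 3) *
          normalPdf μ σ x ^ (1 + β)
        = (K / σ ^ 6) * ((x - μ) ^ 4 * Real.exp (-a * (x - μ) ^ 2)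
            - 2 * σ ^ 2 * ((x - μ) ^ 2 * Real.exp (-a * (x - μ) ^ 2))
            + σ ^ 4 * Real.exp (-a * (x - μ) ^ 2)) := by
      intro x; rw [hpdf x]; field_simp; ring
    simp_rw [e11, integral_const_mul]
    rw [show (∫ x : ℝ, ((x - μ) ^ 4 * Real.exp (-a * (x - μ) ^ 2)
            - 2 * σ ^ 2 * ((x - μ) ^ 2 * Real.exp (-a * (x - μ) ^ 2))
            + σ ^ 4 * Real.exp (-a * (x - μ) ^ 2)))
        = ∫ x : ℝ, (x ^ 4 * Real.exp (-a * x ^ 2)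
            - 2 * σ ^ 2 * (x ^ 2 * Real.exp (-a * x ^ 2))
            + σ ^ 4 * Real.exp (-a * x ^ 2)) from
      integral_sub_right_eq_self (fun t : ℝ => t ^ 4 * Real.exp (-a * t ^ 2)
        - 2 * σ ^ 2 * (t ^ 2 * Real.exp (-a * t ^ 2))
        + σ ^ 4 * Real.exp (-a * t ^ 2)) μ]
    have i4 := integrable_pow_gauss ha 4
    have i2 := integrable_pow_gauss ha 2
    have i0 : Integrable fun x : ℝ => Real.exp (-a * x ^ 2) := by
      simpa using integrable_pow_gauss ha 0
    have isub : Integrable (fun x : ℝ => x ^ 4 * Real.exp (-a * x ^ 2)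
        - 2 * σ ^ 2 * (x ^ 2 * Real.exp (-a * x ^ 2))) volume := i4.sub (i2.const_mul _)
    have i0' : Integrable (fun x : ℝ => σ ^ 4 * Real.exp (-a * x ^ 2)) volume :=
      i0.const_mul _
    have i2' : Integrable (fun x : ℝ => 2 * σ ^ 2 * (x ^ 2 * Real.exp (-a * x ^ 2))) volume :=
      i2.const_mul _
    rw [integral_add isub i0', integral_sub i4 i2', integral_const_mul, integral_const_mul,
      m4, m2, m0]
    rw [hKval, h52, h32, haInv]
    field_simp
    ring
end

section
/- Let σ > 0, p > 0, β > 0 and α ∈ ℝ with βp − β + α + 1 > 0. Then ∫₀^∞ (x/σ)^α · f_{σ,p}(x)^β dx = (p/σ)^(β−1) · β^(−(βp−β+α+1)/p) · Γ( (βp−β+α+1)/p ), where Γ is the Gamma function. -/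
open MeasureTheory

/-- The Weibull density with scale `σ > 0` and shape `p > 0`:
`f_{σ,p}(x) = (p/σ)(x/σ)^(p−1) exp(−(x/σ)^p)` for `x > 0` and `0` otherwise. -/
noncomputable def weibullPdf (σ p x : ℝ) : ℝ :=
  if 0 < x then (p / σ) * (x / σ) ^ (p - 1) * Real.exp (-(x / σ) ^ p) else 0

/-- Let `σ > 0`, `p > 0`, `β > 0` and `α ∈ ℝ` with `βp − β + α + 1 > 0`. Then
`∫₀^∞ (x/σ)^α · f_{σ,p}(x)^β dx
  = (p/σ)^(β−1) · β^(−(βp−β+α+1)/p) · Γ((βp−β+α+1)/p)`. -/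
theorem weibull_xi_integral (σ p β α : ℝ) (hσ : 0 < σ) (hp : 0 < p) (hβ : 0 < β)
    (hα : 0 < β * p - β + α + 1) :
    ∫ x in Set.Ioi (0 : ℝ), (x / σ) ^ α * weibullPdf σ p x ^ β =
      (p / σ) ^ (β - 1) * β ^ (-(β * p - β + α + 1) / p) *
        Real.Gamma ((β * p - β + α + 1) / p) := by
  have hσp : 0 < p / σ := div_pos hp hσ
  set q : ℝ := β * (p - 1) + α with hqdef
  have hq1 : -1 < q := by simp only [hqdef]; nlinarith
  have key : ∫ x in Set.Ioi (0 : ℝ), (x / σ) ^ α * weibullPdf σ p x ^ β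
      = ∫ x in Set.Ioi (0 : ℝ),
          (fun t => (p / σ) ^ β * (t ^ q * Real.exp (-β * t ^ p))) (σ⁻¹ * x) := by
    refine setIntegral_congr_fun measurableSet_Ioi fun x hx => ?_
    have hx : (0 : ℝ) < x := hx
    have hxσ : 0 < x / σ := div_pos hx hσ
    simp only [weibullPdf, if_pos hx]
    rw [show σ⁻¹ * x = x / σ by ring,
        Real.mul_rpow (by positivity) (Real.exp_pos _).le,
        Real.mul_rpow (by positivity) (by positivity),
        ← Real.rpow_mul hxσ.le, ← Real.exp_mul,
        show q = α + (p - 1) * β by rw [hqdef]; ring,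
        Real.rpow_add hxσ]
    ring_nf
  rw [key, integral_comp_mul_left_Ioi
      (fun t => (p / σ) ^ β * (t ^ q * Real.exp (-β * t ^ p))) 0 (inv_pos.mpr hσ),
    mul_zero, smul_eq_mul, inv_inv,
    integral_const_mul, integral_rpow_mul_exp_neg_mul_rpow hp hq1 hβ,
    show q + 1 = β * p - β + α + 1 by rw [hqdef]; ring,
    show β - 1 = β - 1 from rfl]
  rw [Real.rpow_sub hσp, Real.rpow_one]
  field_simp
end

section
/- Let σ₁, σ₂ > 0 and p₁, p₂ > 0. Then the Kullback–Leibler divergence between the two Weibull densities satisfies ∫₀^∞ f_{σ₁,p₁}(x) · log( f_{σ₁,p₁}(x) / f_{σ₂,p₂}(x) ) dx = log(p₁/σ₁) − log(p₂/σ₂) − (p₂ − 1)·( log σ₁ − log σ₂ ) − (p₁ − p₂)·γ_E/p₁ + (σ₁/σ₂)^(p₂) · Γ(1 + p₂/p₁) − 1, where γ_E is the Euler–Mascheroni constant and Γ is the Gamma function. -/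
open MeasureTheory

section Aux

open Real Set Filter Asymptotics

/-- The integral `∫₀^∞ log t · e^{-t} dt` equals `-γ`. -/
lemma integral_log_mul_exp_neg :
    ∫ t in Ioi (0:ℝ), Real.log t * Real.exp (-t) = -Real.eulerMascheroniConstant := by
  have h1 := Complex.hasDerivAt_GammaIntegral (s := 1) (by norm_num)
  have h2 : HasDerivAt Complex.GammaIntegral
      ((∫ t in Ioi (0:ℝ), Real.log t * Real.exp (-t) : ℝ) : ℂ) 1 := by
    convert h1 using 1
    calc ((∫ t in Ioi (0:ℝ), Real.log t * Real.exp (-t) : ℝ) : ℂ)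
        = ∫ t in Ioi (0:ℝ), ((Real.log t * Real.exp (-t) : ℝ) : ℂ) :=
          integral_ofReal.symm
      _ = ∫ t in Ioi (0:ℝ), (t:ℂ) ^ ((1:ℂ) - 1) * ((Real.log t : ℂ) * (Real.exp (-t) : ℂ)) := by
          refine setIntegral_congr_fun measurableSet_Ioi fun t ht => ?_
          rw [sub_self, Complex.cpow_zero, one_mul, Complex.ofReal_mul]
  have hopen : IsOpen {z : ℂ | 0 < z.re} := isOpen_lt continuous_const Complex.continuous_re
  have h3 : Complex.Gamma =ᶠ[nhds (1:ℂ)] Complex.GammaIntegral := by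
    filter_upwards [hopen.mem_nhds (by norm_num)] with z hz
    exact Complex.Gamma_eq_integral hz
  have h4 : HasDerivAt Complex.Gamma
      ((∫ t in Ioi (0:ℝ), Real.log t * Real.exp (-t) : ℝ) : ℂ) ((1:ℝ):ℂ) := by
    rw [Complex.ofReal_one]
    exact h2.congr_of_eventuallyEq h3
  have h5 := h4.comp_ofReal
  have h6 : HasDerivAt (fun x : ℝ => (Complex.Gamma x : ℂ))
      ((-Real.eulerMascheroniConstant : ℝ) : ℂ) 1 := by
    have := Real.hasDerivAt_Gamma_one.ofReal_comp (z := 1)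
    simpa [Complex.Gamma_ofReal] using this
  have := h5.unique h6
  exact_mod_cast this

/-- Integrability of `t^c · e^{-t}` on `(0,∞)` for `c > -1`. -/
lemma integrableOn_rpow_mul_exp_neg {c : ℝ} (hc : -1 < c) :
    IntegrableOn (fun t : ℝ => t ^ c * Real.exp (-t)) (Ioi 0) := by
  have h := Real.GammaIntegral_convergent (s := c + 1) (by linarith)
  have he : (fun t : ℝ => t ^ c * Real.exp (-t))
      = fun t : ℝ => Real.exp (-t) * t ^ (c + 1 - 1) := by
    funext t; rw [add_sub_cancel_right, mul_comm]
  rw [he]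
  exact h

/-- Integrability of `log t · e^{-t}` on `(0,∞)`. -/
lemma integrableOn_log_mul_exp_neg :
    IntegrableOn (fun t : ℝ => Real.log t * Real.exp (-t)) (Ioi 0) := by
  have hexp : (fun t : ℝ => Real.exp (-t)) =O[atTop] fun t : ℝ => t ^ (-3 : ℝ) := by
    simpa only [neg_one_mul] using (isLittleO_exp_neg_mul_rpow_atTop zero_lt_one _).isBigO
  have htop : (fun t : ℝ => Real.log t * Real.exp (-t)) =O[atTop]
      fun t : ℝ => t ^ (-(2:ℝ)) := by
    simpa [smul_eq_mul] using isBigO_rpow_top_log_smul (by norm_num : (2:ℝ) < 3) hexp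
  have hexp0 : (fun t : ℝ => Real.exp (-t)) =O[nhdsWithin (0:ℝ) (Ioi 0)]
      fun t : ℝ => t ^ (-(0:ℝ)) := by
    simp only [neg_zero, Real.rpow_zero]
    refine isBigO_const_of_tendsto (?_ : Tendsto _ _ (nhds (1:ℝ))) one_ne_zero
    have : Tendsto (fun t : ℝ => Real.exp (-t)) (nhds 0) (nhds (Real.exp (-0))) :=
      (Real.continuous_exp.comp continuous_neg).tendsto 0
    simpa using this.mono_left nhdsWithin_le_nhds
  have hbot : (fun t : ℝ => Real.log t * Real.exp (-t)) =O[nhdsWithin (0:ℝ) (Ioi 0)]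
      fun t : ℝ => t ^ (-(1/2 : ℝ)) := by
    simpa [smul_eq_mul] using isBigO_rpow_zero_log_smul (by norm_num : (0:ℝ) < 1/2) hexp0
  have hloc : LocallyIntegrableOn (fun t : ℝ => Real.log t * Real.exp (-t)) (Ioi 0) := by
    refine ContinuousOn.locallyIntegrableOn ?_ measurableSet_Ioi
    exact (continuousOn_log.mono fun x hx => ne_of_gt hx).mul
      (Real.continuous_exp.comp continuous_neg).continuousOn
  have h := mellin_convergent_of_isBigO_scalar (s := 1) hloc htop (by norm_num) hbot
    (by norm_num)
  have he : (fun t : ℝ => t ^ ((1:ℝ) - 1) * (Real.log t * Real.exp (-t)))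
      = fun t : ℝ => t ^ (0:ℝ) * (Real.log t * Real.exp (-t)) := by norm_num
  rw [he] at h
  refine h.congr_fun (fun t ht => ?_) measurableSet_Ioi
  simp only [Real.rpow_zero, one_mul]

end Aux

/-- Let `σ₁, σ₂ > 0` and `p₁, p₂ > 0`. Then the Kullback–Leibler divergence
between the two Weibull densities satisfies
`∫₀^∞ f_{σ₁,p₁}(x) · log( f_{σ₁,p₁}(x) / f_{σ₂,p₂}(x) ) dx
  = log(p₁/σ₁) − log(p₂/σ₂) − (p₂ − 1)·(log σ₁ − log σ₂) − (p₁ − p₂)·γ_E/p₁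
    + (σ₁/σ₂)^(p₂) · Γ(1 + p₂/p₁) − 1`. -/
theorem kl_weibull_weibull (σ₁ σ₂ p₁ p₂ : ℝ)
    (hσ₁ : 0 < σ₁) (hσ₂ : 0 < σ₂) (hp₁ : 0 < p₁) (hp₂ : 0 < p₂) :
    ∫ x in Set.Ioi (0 : ℝ),
        weibullPdf σ₁ p₁ x * Real.log (weibullPdf σ₁ p₁ x / weibullPdf σ₂ p₂ x) =
      Real.log (p₁ / σ₁) - Real.log (p₂ / σ₂) - (p₂ - 1) * (Real.log σ₁ - Real.log σ₂) -
          (p₁ - p₂) * Real.eulerMascheroniConstant / p₁ +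
        (σ₁ / σ₂) ^ p₂ * Real.Gamma (1 + p₂ / p₁) - 1 := by
  classical
  set γE := Real.eulerMascheroniConstant with hγE
  set A : ℝ := Real.log (p₁ / σ₁) - Real.log (p₂ / σ₂) -
      (p₂ - 1) * (Real.log σ₁ - Real.log σ₂) with hA
  set b : ℝ := (σ₁ / σ₂) ^ p₂ with hb
  set q : ℝ := p₂ / p₁ with hq
  have hq0 : 0 < q := div_pos hp₂ hp₁
  set g : ℝ → ℝ := fun u =>
    Real.exp (-u) * (A + (p₁ - p₂) / p₁ * Real.log u - u + b * u ^ q) with hgdef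
  set F : ℝ → ℝ := fun x =>
    weibullPdf σ₁ p₁ x * Real.log (weibullPdf σ₁ p₁ x / weibullPdf σ₂ p₂ x) with hFdef
  -- value of the normalized integral
  have hgval : ∫ u in Set.Ioi (0:ℝ), g u
      = A - (p₁ - p₂) * γE / p₁ + b * Real.Gamma (1 + q) - 1 := by
    have i1 : IntegrableOn (fun u : ℝ => Real.exp (-u)) (Set.Ioi 0) := by
      simpa using exp_neg_integrableOn_Ioi 0 one_pos
    have i2 : IntegrableOn (fun u : ℝ => Real.log u * Real.exp (-u)) (Set.Ioi 0) :=
      integrableOn_log_mul_exp_neg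
    have i3 : IntegrableOn (fun u : ℝ => u * Real.exp (-u)) (Set.Ioi 0) := by
      have := integrableOn_rpow_mul_exp_neg (c := 1) (by norm_num)
      simpa using this
    have i4 : IntegrableOn (fun u : ℝ => u ^ q * Real.exp (-u)) (Set.Ioi 0) :=
      integrableOn_rpow_mul_exp_neg (by linarith)
    have hg' : g = fun u : ℝ => (A * Real.exp (-u)
        + (p₁ - p₂) / p₁ * (Real.log u * Real.exp (-u)) - u * Real.exp (-u))
        + b * (u ^ q * Real.exp (-u)) := by
      funext u; simp only [hgdef]; ring
    have I1 := i1.const_mul A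
    have I2 := i2.const_mul ((p₁ - p₂) / p₁)
    have I4 := i4.const_mul b
    have v1 : ∫ u in Set.Ioi (0:ℝ), Real.exp (-u) = 1 := by
      have h := Real.Gamma_eq_integral (s := 1) one_pos
      rw [Real.Gamma_one] at h
      symm
      simpa using h
    have v2 : ∫ u in Set.Ioi (0:ℝ), Real.log u * Real.exp (-u) = -γE :=
      integral_log_mul_exp_neg
    have v3 : ∫ u in Set.Ioi (0:ℝ), u * Real.exp (-u) = 1 := by
      have h := Real.Gamma_eq_integral (s := 2) two_pos
      rw [Real.Gamma_two, show (2:ℝ) - 1 = 1 by norm_num] at h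
      symm
      simpa [Real.rpow_one, mul_comm] using h
    have v4 : ∫ u in Set.Ioi (0:ℝ), u ^ q * Real.exp (-u) = Real.Gamma (1 + q) := by
      have h := Real.Gamma_eq_integral (s := 1 + q) (by linarith)
      rw [show (1:ℝ) + q - 1 = q by ring] at h
      symm
      simpa [mul_comm] using h
    have I12 : Integrable (fun u : ℝ => A * Real.exp (-u)
        + (p₁ - p₂) / p₁ * (Real.log u * Real.exp (-u))) (volume.restrict (Set.Ioi 0)) :=
      I1.add I2
    have I123 : Integrable (fun u : ℝ => A * Real.exp (-u)
        + (p₁ - p₂) / p₁ * (Real.log u * Real.exp (-u))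
        - u * Real.exp (-u)) (volume.restrict (Set.Ioi 0)) := I12.sub i3
    rw [hg']
    rw [integral_add I123 I4, integral_sub I12 i3,
      integral_add I1 I2, integral_const_mul, integral_const_mul, integral_const_mul,
      v1, v2, v3, v4]
    field_simp
    ring
  -- pointwise identity after rescaling
  have key : ∀ t ∈ Set.Ioi (0:ℝ),
      F (σ₁ * t) = σ₁⁻¹ * ((p₁ * t ^ (p₁ - 1)) • g (t ^ p₁)) := by
    intro t ht
    have ht0 : 0 < t := ht
    have hst : 0 < σ₁ * t := mul_pos hσ₁ ht0
    have hcan : σ₁ * t / σ₁ = t := by field_simp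
    have hst2 : σ₁ * t / σ₂ = σ₁ / σ₂ * t := by ring
    have htp : (0:ℝ) < t ^ (p₁ - 1) := Real.rpow_pos_of_pos ht0 _
    have hσσ : (0:ℝ) < σ₁ / σ₂ := div_pos hσ₁ hσ₂
    have hσσt : (0:ℝ) < σ₁ / σ₂ * t := mul_pos hσσ ht0
    have hf1 : weibullPdf σ₁ p₁ (σ₁ * t)
        = (p₁ / σ₁) * t ^ (p₁ - 1) * Real.exp (-t ^ p₁) := by
      rw [weibullPdf, if_pos hst, hcan]
    have hf2 : weibullPdf σ₂ p₂ (σ₁ * t)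
        = (p₂ / σ₂) * (σ₁ / σ₂ * t) ^ (p₂ - 1) * Real.exp (-(σ₁ / σ₂ * t) ^ p₂) := by
      rw [weibullPdf, if_pos hst, hst2]
    have hf1pos : 0 < weibullPdf σ₁ p₁ (σ₁ * t) := by
      rw [hf1]; positivity
    have hf2pos : 0 < weibullPdf σ₂ p₂ (σ₁ * t) := by
      rw [hf2]; positivity
    have hlog : Real.log (weibullPdf σ₁ p₁ (σ₁ * t) / weibullPdf σ₂ p₂ (σ₁ * t))
        = (Real.log (p₁ / σ₁) + (p₁ - 1) * Real.log t - t ^ p₁)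
          - (Real.log (p₂ / σ₂) + (p₂ - 1) * (Real.log σ₁ - Real.log σ₂ + Real.log t)
            - b * t ^ p₂) := by
      rw [Real.log_div (ne_of_gt hf1pos) (ne_of_gt hf2pos), hf1, hf2]
      have l1 : Real.log ((p₁ / σ₁) * t ^ (p₁ - 1) * Real.exp (-t ^ p₁))
          = Real.log (p₁ / σ₁) + (p₁ - 1) * Real.log t - t ^ p₁ := by
        rw [Real.log_mul (by positivity) (Real.exp_ne_zero _),
          Real.log_mul (by positivity) (ne_of_gt htp), Real.log_exp,
          Real.log_rpow ht0]
        ring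
      have l2 : Real.log ((p₂ / σ₂) * (σ₁ / σ₂ * t) ^ (p₂ - 1)
            * Real.exp (-(σ₁ / σ₂ * t) ^ p₂))
          = Real.log (p₂ / σ₂) + (p₂ - 1) * (Real.log σ₁ - Real.log σ₂ + Real.log t)
            - b * t ^ p₂ := by
        rw [Real.log_mul (by positivity) (Real.exp_ne_zero _),
          Real.log_mul (by positivity) (ne_of_gt (Real.rpow_pos_of_pos hσσt _)),
          Real.log_exp, Real.log_rpow hσσt,
          Real.mul_rpow (le_of_lt hσσ) (le_of_lt ht0),
          Real.log_mul (ne_of_gt hσσ) (ne_of_gt ht0),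
          Real.log_div (ne_of_gt hσ₁) (ne_of_gt hσ₂)]
        ring
      rw [l1, l2]
    have hgt : g (t ^ p₁) = Real.exp (-t ^ p₁)
        * (A + (p₁ - p₂) * Real.log t - t ^ p₁ + b * t ^ p₂) := by
      have e1 : Real.log (t ^ p₁) = p₁ * Real.log t := Real.log_rpow ht0 _
      have e2 : (t ^ p₁) ^ q = t ^ p₂ := by
        rw [← Real.rpow_mul (le_of_lt ht0)]
        congr 1
        field_simp [hq]
        rw [hq]; field_simp
      have e3 : (p₁ - p₂) / p₁ * (p₁ * Real.log t) = (p₁ - p₂) * Real.log t := by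
        field_simp
      rw [hgdef]
      simp only
      rw [e1, e2, e3]
    rw [hFdef]
    simp only
    rw [hlog, hf1, hgt, smul_eq_mul, hA]
    field_simp
    ring
  -- change of variables
  have step1 := MeasureTheory.integral_comp_mul_left_Ioi F 0 hσ₁
  rw [mul_zero] at step1
  have step2 : ∫ t in Set.Ioi (0:ℝ), F (σ₁ * t)
      = ∫ t in Set.Ioi (0:ℝ), σ₁⁻¹ * ((p₁ * t ^ (p₁ - 1)) • g (t ^ p₁)) :=
    setIntegral_congr_fun measurableSet_Ioi key
  have step3 : ∫ t in Set.Ioi (0:ℝ), σ₁⁻¹ * ((p₁ * t ^ (p₁ - 1)) • g (t ^ p₁))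
      = σ₁⁻¹ * ∫ t in Set.Ioi (0:ℝ), (p₁ * t ^ (p₁ - 1)) • g (t ^ p₁) :=
    integral_const_mul _ _
  have step4 : ∫ t in Set.Ioi (0:ℝ), (p₁ * t ^ (p₁ - 1)) • g (t ^ p₁)
      = ∫ u in Set.Ioi (0:ℝ), g u :=
    MeasureTheory.integral_comp_rpow_Ioi_of_pos hp₁
  have hmain : ∫ x in Set.Ioi (0:ℝ), F x = ∫ u in Set.Ioi (0:ℝ), g u := by
    have : ∫ x in Set.Ioi (0:ℝ), F x
        = σ₁ * ∫ t in Set.Ioi (0:ℝ), F (σ₁ * t) := by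
      rw [step1, smul_eq_mul]
      field_simp
    rw [this, step2, step3, step4]
    field_simp
  rw [hFdef] at hmain
  rw [hmain, hgval]
end
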